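/- arXiv:1205.5876 — 5 statements merged into one kernel-verified Lean document; each statement's English description precedes it below -/
import Mathlib

section
/- Let m, n, s, t be positive integers with m + n = s + t, and let a_1, a_2, x, y be real numbers with 0 < x ≤ a_1 < a_2 ≤ y. If s·x + t·y = m·a_1 + n·a_2 and s·x² + t·y² = m·a_1² + n·a_2², then m = s, n = t, x = a_1, and y = a_2. -/
theorem stmt_2 (m n s t : ℕ) (hm : 0 < m) (hn : 0 < n) (hs : 0 < s) (ht : 0 < t)
    (hmn : m + n = s + t) (a₁ a₂ x y : ℝ)
    (hx : 0 < x) (hxa : x ≤ a₁) (ha : a₁ < a₂) (hay : a₂ ≤ y)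
    (h1 : (s : ℝ) * x + (t : ℝ) * y = (m : ℝ) * a₁ + (n : ℝ) * a₂)
    (h2 : (s : ℝ) * x ^ 2 + (t : ℝ) * y ^ 2 = (m : ℝ) * a₁ ^ 2 + (n : ℝ) * a₂ ^ 2) :
    m = s ∧ n = t ∧ x = a₁ ∧ y = a₂ := by
  have hmnR : (m : ℝ) + n = (s : ℝ) + t := by exact_mod_cast hmn
  have key : (s : ℝ) * ((x - a₁) * (x - a₂)) + (t : ℝ) * ((y - a₁) * (y - a₂)) = 0 := by
    linear_combination h2 - (a₁ + a₂) * h1 - (a₁ * a₂) * hmnR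
  have h1' : (0:ℝ) ≤ (s : ℝ) * ((x - a₁) * (x - a₂)) := by
    have hp : (0:ℝ) ≤ (x - a₁) * (x - a₂) := by
      nlinarith [mul_nonneg (sub_nonneg.2 hxa) (sub_nonneg.2 (hxa.trans ha.le))]
    positivity
  have h2' : (0:ℝ) ≤ (t : ℝ) * ((y - a₁) * (y - a₂)) := by
    have hp : (0:ℝ) ≤ (y - a₁) * (y - a₂) := mul_nonneg (by linarith) (by linarith)
    positivity
  have hsR : (0:ℝ) < s := by exact_mod_cast hs
  have htR : (0:ℝ) < t := by exact_mod_cast ht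
  have e1 : (x - a₁) * (x - a₂) = 0 := by
    have := le_antisymm (by linarith) h1'
    exact (mul_eq_zero.1 this).resolve_left hsR.ne'
  have e2 : (y - a₁) * (y - a₂) = 0 := by
    have := le_antisymm (by linarith) h2'
    exact (mul_eq_zero.1 this).resolve_left htR.ne'
  have hxe : x = a₁ := by
    rcases mul_eq_zero.1 e1 with h | h
    · linarith
    · linarith
  have hye : y = a₂ := by
    rcases mul_eq_zero.1 e2 with h | h
    · linarith
    · linarith
  have hms0 : ((s : ℝ) - m) * (a₁ - a₂) = 0 := by
    linear_combination h1 - (s : ℝ) * hxe - (t : ℝ) * hye + a₂ * hmnR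
  have hms : (m : ℝ) = s := by
    rcases mul_eq_zero.1 hms0 with h | h
    · linarith
    · linarith
  have hms' : m = s := by exact_mod_cast hms
  exact ⟨hms', by omega, hxe, hye⟩
end

section
/- (Bennett) Suppose α_1, α_2, δ_1, δ_2 ≥ 0 are real numbers, d_1 < a_1 < a_2 < d_2 are real numbers, α_1 + α_2 = δ_1 + δ_2, and α_1·a_1 + α_2·a_2 = δ_1·d_1 + δ_2·d_2. If φ : ℝ → ℝ is convex on the interval [d_1, d_2], then α_1·φ(a_1) + α_2·φ(a_2) ≤ δ_1·φ(d_1) + δ_2·φ(d_2). -/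
theorem stmt_3 (α₁ α₂ δ₁ δ₂ a₁ a₂ d₁ d₂ : ℝ)
    (hα₁ : 0 ≤ α₁) (hα₂ : 0 ≤ α₂) (hδ₁ : 0 ≤ δ₁) (hδ₂ : 0 ≤ δ₂)
    (h1 : d₁ < a₁) (h2 : a₁ < a₂) (h3 : a₂ < d₂)
    (hsum : α₁ + α₂ = δ₁ + δ₂)
    (hwsum : α₁ * a₁ + α₂ * a₂ = δ₁ * d₁ + δ₂ * d₂)
    (φ : ℝ → ℝ) (hφ : ConvexOn ℝ (Set.Icc d₁ d₂) φ) :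
    α₁ * φ a₁ + α₂ * φ a₂ ≤ δ₁ * φ d₁ + δ₂ * φ d₂ := by
  have hD : (0:ℝ) < d₂ - d₁ := by linarith
  have key : ∀ a : ℝ, d₁ ≤ a → a ≤ d₂ →
      φ a ≤ ((d₂ - a)/(d₂ - d₁)) * φ d₁ + ((a - d₁)/(d₂ - d₁)) * φ d₂ := by
    intro a ha1 ha2
    have ht : 0 ≤ (d₂ - a)/(d₂ - d₁) := div_nonneg (by linarith) hD.le
    have hs : 0 ≤ (a - d₁)/(d₂ - d₁) := div_nonneg (by linarith) hD.le
    have hts : (d₂ - a)/(d₂ - d₁) + (a - d₁)/(d₂ - d₁) = 1 := by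
      field_simp
      ring
    have h := hφ.2 (Set.mem_Icc.2 ⟨le_refl d₁, by linarith⟩)
      (Set.mem_Icc.2 ⟨by linarith, le_refl d₂⟩) ht hs hts
    have hcomb : ((d₂ - a)/(d₂ - d₁)) • d₁ + ((a - d₁)/(d₂ - d₁)) • d₂ = a := by
      simp only [smul_eq_mul]
      field_simp
      ring
    rw [hcomb] at h
    simpa using h
  have k1 := key a₁ h1.le (by linarith)
  have k2 := key a₂ (by linarith) h3.le
  have c1 : α₁ * ((d₂ - a₁)/(d₂ - d₁)) + α₂ * ((d₂ - a₂)/(d₂ - d₁)) = δ₁ := by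
    field_simp
    linear_combination d₂ * hsum - hwsum
  have c2 : α₁ * ((a₁ - d₁)/(d₂ - d₁)) + α₂ * ((a₂ - d₁)/(d₂ - d₁)) = δ₂ := by
    field_simp
    linear_combination hwsum - d₁ * hsum
  have e : α₁ * ((d₂ - a₁)/(d₂ - d₁) * φ d₁ + (a₁ - d₁)/(d₂ - d₁) * φ d₂)
      + α₂ * ((d₂ - a₂)/(d₂ - d₁) * φ d₁ + (a₂ - d₁)/(d₂ - d₁) * φ d₂)
      = δ₁ * φ d₁ + δ₂ * φ d₂ := by
    linear_combination φ d₁ * c1 + φ d₂ * c2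
  linarith [mul_le_mul_of_nonneg_left k1 hα₁, mul_le_mul_of_nonneg_left k2 hα₂]
end

section
/- (Bennett) Suppose α_1, α_2, δ_1, δ_2 ≥ 0 are real numbers, a_1 < d_1 < a_2 < d_2 are real numbers, α_1 + α_2 = δ_1 + δ_2, α_1·a_1 + α_2·a_2 = δ_1·d_1 + δ_2·d_2, and α_1·a_1² + α_2·a_2² ≥ δ_1·d_1² + δ_2·d_2². If φ : ℝ → ℝ is differentiable, concave on the interval [a_1, d_2], and its derivative φ′ is convex on [a_1, d_2], then α_1·φ(a_1) + α_2·φ(a_2) ≤ δ_1·φ(d_1) + δ_2·φ(d_2). -/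
open Set

set_option maxHeartbeats 1600000 in
theorem stmt_4 (α₁ α₂ δ₁ δ₂ a₁ a₂ d₁ d₂ : ℝ)
    (hα₁ : 0 ≤ α₁) (hα₂ : 0 ≤ α₂) (hδ₁ : 0 ≤ δ₁) (hδ₂ : 0 ≤ δ₂)
    (h1 : a₁ < d₁) (h2 : d₁ < a₂) (h3 : a₂ < d₂)
    (hsum : α₁ + α₂ = δ₁ + δ₂)
    (hwsum : α₁ * a₁ + α₂ * a₂ = δ₁ * d₁ + δ₂ * d₂)
    (hsq : α₁ * a₁ ^ 2 + α₂ * a₂ ^ 2 ≥ δ₁ * d₁ ^ 2 + δ₂ * d₂ ^ 2)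
    (φ : ℝ → ℝ) (hdiff : Differentiable ℝ φ)
    (hconc : ConcaveOn ℝ (Set.Icc a₁ d₂) φ)
    (hconv : ConvexOn ℝ (Set.Icc a₁ d₂) (deriv φ)) :
    α₁ * φ a₁ + α₂ * φ a₂ ≤ δ₁ * φ d₁ + δ₂ * φ d₂ := by
  set A : ℝ := (φ a₂ - φ d₁) / (a₂ - d₁) with hA
  set A₂ : ℝ := (φ d₂ - φ a₂) / (d₂ - a₂) with hA₂
  set B : ℝ := (A₂ - A) / (d₂ - d₁) with hB
  have hd1mem : d₁ ∈ Icc a₁ d₂ := ⟨le_of_lt h1, by linarith⟩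
  have hd2mem : d₂ ∈ Icc a₁ d₂ := ⟨by linarith, le_refl _⟩
  -- B ≤ 0 by concavity
  have hBle : B ≤ 0 := by
    have := hconc.slope_anti_adjacent hd1mem hd2mem h2 h3
    have : A₂ - A ≤ 0 := by rw [hA, hA₂]; linarith
    rw [hB]
    exact div_nonpos_of_nonpos_of_nonneg this (by linarith)
  -- the quadratic
  set q : ℝ → ℝ := fun x => φ d₁ + A * (x - d₁) + B * ((x - d₁) * (x - a₂)) with hq
  have hqd₁ : q d₁ = φ d₁ := by simp [hq]
  have hqa₂ : q a₂ = φ a₂ := by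
    have : a₂ - d₁ ≠ 0 := by linarith
    simp only [hq, hA]
    field_simp
    ring
  have hqd₂ : q d₂ = φ d₂ := by
    have h21 : a₂ - d₁ ≠ 0 := by linarith
    have h32 : d₂ - a₂ ≠ 0 := by linarith
    have h31 : d₂ - d₁ ≠ 0 := by linarith
    simp only [hq, hB, hA, hA₂]
    field_simp
    ring
  set F : ℝ → ℝ := fun x => φ x - q x with hF
  set G : ℝ → ℝ := fun x => deriv φ x - (A + B * ((x - a₂) + (x - d₁))) with hG
  have hF' : ∀ x, HasDerivAt F (G x) x := by
    intro x
    have hid : HasDerivAt (fun y : ℝ => y - d₁) 1 x := (hasDerivAt_id x).sub_const d₁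
    have hid2 : HasDerivAt (fun y : ℝ => y - a₂) 1 x := (hasDerivAt_id x).sub_const a₂
    have hmul : HasDerivAt (fun y : ℝ => (y - d₁) * (y - a₂)) (1 * (x - a₂) + (x - d₁) * 1) x :=
      hid.mul hid2
    have hq' : HasDerivAt q (0 + A * 1 + B * (1 * (x - a₂) + (x - d₁) * 1)) x :=
      ((hasDerivAt_const x (φ d₁)).add (hid.const_mul A)).add (hmul.const_mul B)
    have h : HasDerivAt F (deriv φ x - (0 + A * 1 + B * (1 * (x - a₂) + (x - d₁) * 1))) x :=
      ((hdiff x).hasDerivAt).sub hq'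
    convert h using 1
    simp only [hG]
    ring
  have hFc : Continuous F := by
    apply hdiff.continuous.sub
    fun_prop
  have hdF : ∀ x, deriv F x = G x := fun x => (hF' x).deriv
  -- Rolle points
  have hFd₁ : F d₁ = 0 := by simp [hF, hqd₁]
  have hFa₂ : F a₂ = 0 := by simp [hF, hqa₂]
  have hFd₂ : F d₂ = 0 := by simp [hF, hqd₂]
  obtain ⟨ξ₁, hξ₁, hGξ₁⟩ : ∃ c ∈ Ioo d₁ a₂, deriv F c = 0 :=
    exists_deriv_eq_zero h2 hFc.continuousOn (by rw [hFd₁, hFa₂])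
  obtain ⟨ξ₂, hξ₂, hGξ₂⟩ : ∃ c ∈ Ioo a₂ d₂, deriv F c = 0 :=
    exists_deriv_eq_zero h3 hFc.continuousOn (by rw [hFa₂, hFd₂])
  rw [hdF] at hGξ₁ hGξ₂
  -- G is convex on Icc a₁ d₂
  have hGconv : ConvexOn ℝ (Icc a₁ d₂) G := by
    apply hconv.sub
    refine ⟨convex_Icc _ _, fun x _ y _ a b ha hb hab => le_of_eq ?_⟩
    simp only [smul_eq_mul]
    linear_combination (A - B * (a₂ + d₁)) * hab
  -- MVT on [a₁, d₁]
  obtain ⟨c, hc, hcd⟩ : ∃ c ∈ Ioo a₁ d₁, deriv F c = (F d₁ - F a₁) / (d₁ - a₁) :=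
    exists_deriv_eq_slope F h1 hFc.continuousOn (fun x _ => by
      exact ((hF' x).differentiableAt).differentiableWithinAt)
  rw [hdF] at hcd
  -- G c ≥ 0 from convexity with G ξ₁ = G ξ₂ = 0, c < ξ₁ < ξ₂
  have hclt : c < ξ₁ := lt_trans hc.2 hξ₁.1
  have hξlt : ξ₁ < ξ₂ := lt_trans hξ₁.2 hξ₂.1
  have hGc : 0 ≤ G c := by
    set lam : ℝ := (ξ₂ - ξ₁) / (ξ₂ - c) with hlam
    set mu : ℝ := (ξ₁ - c) / (ξ₂ - c) with hmu
    have hden : (0:ℝ) < ξ₂ - c := by linarith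
    have hlampos : 0 < lam := div_pos (by linarith) hden
    have hmupos : 0 < mu := div_pos (by linarith) hden
    have hls : lam + mu = 1 := by rw [hlam, hmu]; field_simp; ring
    have hcomb : lam • c + mu • ξ₂ = ξ₁ := by
      rw [smul_eq_mul, smul_eq_mul, hlam, hmu]
      field_simp
      ring
    have hcmem : c ∈ Icc a₁ d₂ := ⟨le_of_lt hc.1, by linarith [hc.2]⟩
    have hξ₂mem : ξ₂ ∈ Icc a₁ d₂ := ⟨by linarith [hξ₂.1], le_of_lt hξ₂.2⟩
    have := hGconv.2 hcmem hξ₂mem (le_of_lt hlampos) (le_of_lt hmupos) hls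
    rw [hcomb, hGξ₁] at this
    simp only [smul_eq_mul, hGξ₂, mul_zero, add_zero] at this
    nlinarith
  -- hence F a₁ ≤ 0
  have hFa₁ : F a₁ ≤ 0 := by
    have : 0 ≤ (F d₁ - F a₁) / (d₁ - a₁) := hcd ▸ hGc
    have h' : 0 ≤ F d₁ - F a₁ := by
      by_contra h
      push_neg at h
      have := div_neg_of_neg_of_pos (by linarith : F d₁ - F a₁ < 0) (by linarith : (0:ℝ) < d₁ - a₁)
      linarith
    linarith [hFd₁]
  have hφa₁ : φ a₁ ≤ q a₁ := by
    have : φ a₁ - q a₁ ≤ 0 := hFa₁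
    linarith
  clear_value A A₂ B q F G
  -- quadratic comparison
  have key : α₁ * q a₁ + α₂ * q a₂ ≤ δ₁ * q d₁ + δ₂ * q d₂ := by
    have hdiffsq : 0 ≤ α₁ * a₁ ^ 2 + α₂ * a₂ ^ 2 - (δ₁ * d₁ ^ 2 + δ₂ * d₂ ^ 2) := by linarith
    have h0 : 0 ≤ B * ((δ₁ * d₁ ^ 2 + δ₂ * d₂ ^ 2) - (α₁ * a₁ ^ 2 + α₂ * a₂ ^ 2)) := by
      nlinarith [mul_nonneg (neg_nonneg.2 hBle) hdiffsq]
    have e : δ₁ * q d₁ + δ₂ * q d₂ - (α₁ * q a₁ + α₂ * q a₂)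
        = B * ((δ₁ * d₁ ^ 2 + δ₂ * d₂ ^ 2) - (α₁ * a₁ ^ 2 + α₂ * a₂ ^ 2)) := by
      simp only [hq]
      linear_combination (-(φ d₁ - A * d₁ + B * (d₁ * a₂))) * hsum + (-(A - B * (d₁ + a₂))) * hwsum
    linarith [e, h0]
  calc α₁ * φ a₁ + α₂ * φ a₂ ≤ α₁ * q a₁ + α₂ * q a₂ := by
        rw [hqa₂]
        have := mul_le_mul_of_nonneg_left hφa₁ hα₁
        linarith
    _ ≤ δ₁ * q d₁ + δ₂ * q d₂ := key
    _ = δ₁ * φ d₁ + δ₂ * φ d₂ := by rw [hqd₁, hqd₂]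
end

section
/- Let p > 0 be a real number, ν a real number, and λ ≥ 0, c ≥ 0 real numbers. Define y : ℝ → ℝ by y(x) = −p + ν·x^{p+1} − 2λ·x^{p+2} + c·x^{p}. Then the set {x ∈ ℝ : x > 0 and y(x) = 0} has at most two elements. -/
lemma three_of_two_lt {α : Type*} {s : Set α} (h : 2 < s.encard) :
    ∃ a b c, a ∈ s ∧ b ∈ s ∧ c ∈ s ∧ a ≠ b ∧ a ≠ c ∧ b ≠ c := by
  obtain ⟨a, -, ha, -, -⟩ := Set.one_lt_encard_iff.1 (lt_trans (by norm_num : (1:ℕ∞) < 2) h)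
  have h2 : 1 < (s \ {a}).encard := by
    by_contra hle
    push_neg at hle
    have := Set.encard_diff_singleton_add_one ha
    have : s.encard ≤ 2 := by
      rw [← this]
      calc (s \ {a}).encard + 1 ≤ 1 + 1 := by gcongr
        _ = 2 := by norm_num
    exact absurd h (not_lt.2 this)
  obtain ⟨b, c, hb, hc, hbc⟩ := Set.one_lt_encard_iff.1 h2
  exact ⟨a, b, c, ha, hb.1, hc.1, fun e => hb.2 e.symm, fun e => hc.2 e.symm, hbc⟩

lemma key_no_three (p ν lam c : ℝ) (hp : 0 < p) (hlam : 0 ≤ lam) (hc : 0 ≤ c)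
    (x1 x2 x3 : ℝ) (h12 : x1 < x2) (h23 : x2 < x3) (hx1 : 0 < x1)
    (e1 : -p + ν * x1 ^ (p + 1) - 2 * lam * x1 ^ (p + 2) + c * x1 ^ p = 0)
    (e2 : -p + ν * x2 ^ (p + 1) - 2 * lam * x2 ^ (p + 2) + c * x2 ^ p = 0)
    (e3 : -p + ν * x3 ^ (p + 1) - 2 * lam * x3 ^ (p + 2) + c * x3 ^ p = 0) : False := by
  set f : ℝ → ℝ := fun x => -p + ν * x ^ (p + 1) - 2 * lam * x ^ (p + 2) + c * x ^ p with hf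
  set f' : ℝ → ℝ := fun x =>
    ν * ((p + 1) * x ^ p) - 2 * lam * ((p + 2) * x ^ (p + 1)) + c * (p * x ^ (p - 1)) with hf'
  have hderiv : ∀ x : ℝ, 0 < x → HasDerivAt f (f' x) x := by
    intro x hx
    have h1 : HasDerivAt (fun t : ℝ => t ^ (p + 1)) ((p + 1) * x ^ p) x := by
      have := Real.hasDerivAt_rpow_const (x := x) (p := p + 1) (Or.inl hx.ne')
      simpa using this
    have h2 : HasDerivAt (fun t : ℝ => t ^ (p + 2)) ((p + 2) * x ^ (p + 1)) x := by
      have := Real.hasDerivAt_rpow_const (x := x) (p := p + 2) (Or.inl hx.ne')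
      norm_num at this
      convert this using 2
      ring
    have h3 : HasDerivAt (fun t : ℝ => t ^ p) (p * x ^ (p - 1)) x :=
      Real.hasDerivAt_rpow_const (x := x) (p := p) (Or.inl hx.ne')
    have := (((hasDerivAt_const x (-p)).add (h1.const_mul ν)).sub
      ((h2.const_mul (2 * lam)))).add (h3.const_mul c)
    have hfe : f = (((fun x => -p) + fun y => ν * y ^ (p + 1)) - fun y => 2 * lam * y ^ (p + 2)) +
        fun y => c * y ^ p := by
      funext t
      simp only [hf, Pi.add_apply, Pi.sub_apply]
    rw [hfe]
    exact this.congr_deriv (by simp only [hf']; ring)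
  have hcont : ∀ ⦃u v : ℝ⦄, x1 ≤ u → ContinuousOn f (Set.Icc u v) := by
    intro u v hu
    intro x hx
    exact ((hderiv x (lt_of_lt_of_le hx1 (hu.trans hx.1))).continuousAt).continuousWithinAt
  obtain ⟨a, haI, hfa⟩ := exists_hasDerivAt_eq_zero h12 (hcont le_rfl)
    (by simp [hf]; linarith [e1, e2])
    (fun x hx => hderiv x (lt_trans hx1 hx.1))
  obtain ⟨b, hbI, hfb⟩ := exists_hasDerivAt_eq_zero h23 (hcont (le_of_lt h12))
    (by simp [hf]; linarith [e2, e3])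
    (fun x hx => hderiv x (lt_trans hx1 (lt_trans h12 hx.1)))
  have ha : 0 < a := lt_trans hx1 haI.1
  have hb : 0 < b := lt_trans ha (lt_trans haI.2 hbI.1)
  have hab : a < b := lt_trans haI.2 hbI.1
  -- factor f' t = t^(p-1) * Q t
  have hfac : ∀ t : ℝ, 0 < t →
      f' t = t ^ (p - 1) * (-(2 * lam * (p + 2)) * t ^ 2 + ν * (p + 1) * t + c * p) := by
    intro t ht
    have ep : t ^ p = t ^ (p - 1) * t := by
      rw [← Real.rpow_add_one ht.ne' (p - 1)]
      norm_num
    have ep1 : t ^ (p + 1) = t ^ (p - 1) * t ^ (2 : ℕ) := by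
      rw [← Real.rpow_natCast t 2, ← Real.rpow_add ht]
      ring_nf
    show ν * ((p + 1) * t ^ p) - 2 * lam * ((p + 2) * t ^ (p + 1)) + c * (p * t ^ (p - 1)) =
      t ^ (p - 1) * (-(2 * lam * (p + 2)) * t ^ 2 + ν * (p + 1) * t + c * p)
    rw [ep, ep1]
    ring
  have qa : -(2 * lam * (p + 2)) * a ^ 2 + ν * (p + 1) * a + c * p = 0 := by
    have := hfac a ha
    rw [hfa] at this
    have hpos := Real.rpow_pos_of_pos ha (p - 1)
    rcases mul_eq_zero.1 this.symm with h | h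
    · exact absurd h hpos.ne'
    · exact h
  have qb : -(2 * lam * (p + 2)) * b ^ 2 + ν * (p + 1) * b + c * p = 0 := by
    have := hfac b hb
    rw [hfb] at this
    have hpos := Real.rpow_pos_of_pos hb (p - 1)
    rcases mul_eq_zero.1 this.symm with h | h
    · exact absurd h hpos.ne'
    · exact h
  rcases hlam.eq_or_lt with hl0 | hlpos
  · -- lam = 0
    rw [← hl0] at qa qb
    have hν : ν * (p + 1) = 0 := by
      have h0 : ν * (p + 1) * (a - b) = 0 := by linear_combination qa - qb
      rcases mul_eq_zero.1 h0 with h | h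
      · exact h
      · exact absurd h (sub_ne_zero.2 hab.ne)
    have hν0 : ν = 0 := by
      rcases mul_eq_zero.1 hν with h | h
      · exact h
      · linarith
    have hc0 : c = 0 := by
      have : c * p = 0 := by nlinarith [qa, hν, ha]
      rcases mul_eq_zero.1 this with h | h
      · exact h
      · linarith
    rw [hν0, hc0, ← hl0] at e1
    simp at e1
    linarith
  · -- lam > 0
    have hsum : (a - b) * (ν * (p + 1) - 2 * lam * (p + 2) * (a + b)) = 0 := by
      linear_combination qa - qb
    have hsum' : ν * (p + 1) = 2 * lam * (p + 2) * (a + b) := by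
      rcases mul_eq_zero.1 hsum with h | h
      · exact absurd h (sub_ne_zero.2 hab.ne)
      · linarith
    have hfin : c * p + 2 * lam * (p + 2) * (a * b) = 0 := by
      linear_combination qa - a * hsum'
    nlinarith [mul_pos ha hb, mul_nonneg hc hp.le, mul_pos hlpos (by linarith : (0:ℝ) < p + 2)]

theorem stmt_11 (p ν lam c : ℝ) (hp : 0 < p) (hlam : 0 ≤ lam) (hc : 0 ≤ c) :
    {x : ℝ | 0 < x ∧
      -p + ν * x ^ (p + 1) - 2 * lam * x ^ (p + 2) + c * x ^ p = 0}.encard ≤ 2 := by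
  by_contra hcon
  push_neg at hcon
  obtain ⟨a, b, d, ha, hb, hd, hab, had, hbd⟩ := three_of_two_lt hcon
  simp only [Set.mem_setOf_eq] at ha hb hd
  have K := key_no_three p ν lam c hp hlam hc
  rcases lt_trichotomy a b with h1 | h1 | h1
  · rcases lt_trichotomy b d with h2 | h2 | h2
    · exact K a b d h1 h2 ha.1 ha.2 hb.2 hd.2
    · exact absurd h2 hbd
    · rcases lt_trichotomy a d with h3 | h3 | h3
      · exact K a d b h3 h2 ha.1 ha.2 hd.2 hb.2
      · exact absurd h3 had
      · exact K d a b h3 h1 hd.1 hd.2 ha.2 hb.2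
  · exact absurd h1 hab
  · rcases lt_trichotomy a d with h2 | h2 | h2
    · exact K b a d h1 h2 hb.1 hb.2 ha.2 hd.2
    · exact absurd h2 had
    · rcases lt_trichotomy b d with h3 | h3 | h3
      · exact K b d a h3 h2 hb.1 hb.2 hd.2 ha.2
      · exact absurd h3 hbd
      · exact K d b a h3 h1 hd.1 hd.2 hb.2 ha.2
end

section
/- Let n ≥ 2 and let e_1 ≤ e_2 ≤ ⋯ ≤ e_n be positive real numbers with e_1 < e_n. Then there exists a vector w = (w_1,…,w_n) of real numbers such that: (a) w_1 + ⋯ + w_n = 0; (b) e_1·w_1 + ⋯ + e_n·w_n > 0; (c) w_1/e_1 + ⋯ + w_n/e_n < 0; (d) w_1 < 0; (e) w_1 < w_i for every index i with 2 ≤ i ≤ n−1 and e_i = e_1; and (f) w_i < w_n for every index i with 2 ≤ i ≤ n−1 and e_i = e_n. -/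
theorem stmt_12 (n : ℕ) (hn : 2 ≤ n) (e : Fin n → ℝ)
    (hpos : ∀ i, 0 < e i) (hmono : Monotone e)
    (hne : e ⟨0, by omega⟩ < e ⟨n - 1, by omega⟩) :
    ∃ w : Fin n → ℝ,
      (∑ i, w i = 0) ∧
      (0 < ∑ i, e i * w i) ∧
      (∑ i, w i / e i < 0) ∧
      (w ⟨0, by omega⟩ < 0) ∧
      (∀ i : Fin n, 1 ≤ (i : ℕ) → (i : ℕ) ≤ n - 2 →
        e i = e ⟨0, by omega⟩ → w ⟨0, by omega⟩ < w i) ∧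
      (∀ i : Fin n, 1 ≤ (i : ℕ) → (i : ℕ) ≤ n - 2 →
        e i = e ⟨n - 1, by omega⟩ → w i < w ⟨n - 1, by omega⟩) := by
  have hn0 : (0:ℝ) < (n:ℝ) := by exact_mod_cast (by omega : 0 < n)
  set a : Fin n := ⟨0, by omega⟩ with ha
  set b : Fin n := ⟨n - 1, by omega⟩ with hb
  have hab : a ≠ b := Fin.ne_of_val_ne (show (0:ℕ) ≠ n - 1 by omega)
  set S : ℝ := ∑ i, e i with hS
  set avg : ℝ := S / n with havg
  refine ⟨fun i => e i - avg + (if i = b then 1 else 0) - (if i = a then 1 else 0),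
    ?_, ?_, ?_, ?_, ?_, ?_⟩
  · simp only [Finset.sum_sub_distrib, Finset.sum_add_distrib, Finset.sum_ite_eq',
      Finset.mem_univ, if_true, Finset.sum_const, Finset.card_univ, Fintype.card_fin,
      nsmul_eq_mul, ← hS]
    rw [havg]
    field_simp
    ring
  · have key : ∑ i, e i * (e i - avg + (if i = b then 1 else 0) - (if i = a then 1 else 0))
        = (∑ i, e i ^ 2) - avg * S + e b - e a := by
      rw [Finset.sum_congr rfl (fun i _ => by ring_nf :
        ∀ i ∈ Finset.univ, e i * (e i - avg + (if i = b then 1 else 0) - (if i = a then 1 else 0))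
          = e i ^ 2 - avg * e i + e i * (if i = b then 1 else 0) - e i * (if i = a then 1 else 0))]
      simp only [Finset.sum_sub_distrib, Finset.sum_add_distrib, mul_ite, mul_one,
        mul_zero, Finset.sum_ite_eq', Finset.mem_univ, if_true, ← Finset.mul_sum, ← hS]
    rw [key]
    have hcs : S ^ 2 ≤ n * ∑ i, e i ^ 2 := by
      have := sq_sum_le_card_mul_sum_sq (s := Finset.univ) (f := e)
      simpa [← hS] using this
    have h1 : avg * S ≤ ∑ i, e i ^ 2 := by
      rw [havg, div_mul_eq_mul_div, ← sq, div_le_iff₀ hn0]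
      linarith [hcs]
    linarith [hne]
  · have key : ∑ i, (e i - avg + (if i = b then 1 else 0) - (if i = a then 1 else 0)) / e i
        = (n:ℝ) - avg * (∑ i, 1 / e i) + 1 / e b - 1 / e a := by
      rw [Finset.sum_congr rfl (fun i _ => by
        rw [sub_div, add_div, sub_div, div_self (hpos i).ne']
        ring :
        ∀ i ∈ Finset.univ, (e i - avg + (if i = b then 1 else 0) - (if i = a then 1 else 0)) / e i
          = 1 - avg * (1 / e i) + (if i = b then 1 else 0) / e i - (if i = a then 1 else 0) / e i)]
      simp only [Finset.sum_sub_distrib, Finset.sum_add_distrib, Finset.sum_const,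
        Finset.card_univ, Fintype.card_fin, nsmul_eq_mul, mul_one, ← Finset.mul_sum,
        ite_div, zero_div, Finset.sum_ite_eq', Finset.mem_univ, if_true, one_div]
    rw [key]
    have hcs : (n:ℝ) ^ 2 ≤ S * (∑ i, 1 / e i) := by
      have := Finset.sum_sq_le_sum_mul_sum_of_sq_eq_mul (s := (Finset.univ : Finset (Fin n)))
        (r := fun _ => (1:ℝ)) (f := e) (g := fun i => 1 / e i)
        (fun i _ => (hpos i).le) (fun i _ => (one_div_pos.mpr (hpos i)).le)
        (fun i _ => by
          have := (hpos i).ne'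
          field_simp)
      simpa [← hS] using this
    have h1 : (n:ℝ) ≤ avg * (∑ i, 1 / e i) := by
      rw [havg, div_mul_eq_mul_div, le_div_iff₀ hn0]
      nlinarith [hcs]
    have h2 : 1 / e b < 1 / e a := one_div_lt_one_div_of_lt (hpos a) hne
    linarith
  · simp only [← ha, if_neg hab, if_pos rfl, if_true]
    have h1 : e a ≤ avg := by
      rw [havg, le_div_iff₀ hn0, hS]
      calc e a * n = ∑ _i : Fin n, e a := by
            simp [Finset.sum_const, Finset.card_univ, mul_comm]
        _ ≤ ∑ i, e i := Finset.sum_le_sum (fun i _ => hmono (Fin.le_def.mpr (Nat.zero_le _)))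
    linarith
  · intro i h1 h2 hei
    have hia : i ≠ a := Fin.ne_of_val_ne (show (i:ℕ) ≠ 0 by omega)
    have hib : i ≠ b := Fin.ne_of_val_ne (show (i:ℕ) ≠ n - 1 by omega)
    simp only [← ha, if_neg hab, if_pos rfl, if_neg hia, if_neg hib, if_true]
    rw [hei]; linarith
  · intro i h1 h2 hei
    have hia : i ≠ a := Fin.ne_of_val_ne (show (i:ℕ) ≠ 0 by omega)
    have hib : i ≠ b := Fin.ne_of_val_ne (show (i:ℕ) ≠ n - 1 by omega)
    simp only [← hb, if_neg hab.symm, if_pos rfl, if_neg hia, if_neg hib, if_true]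
    rw [hei]; linarith
end
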